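/- The function l is continuous, takes values in [−1, 0], satisfies the one-sided (monotonicity) condition (l(y) − l(y'))(y − y') ≤ (y − y')² for all y, y' ∈ ℝ, and l is not Lipschitz continuous, i.e. there is no constant L ≥ 0 such that |l(y) − l(y')| ≤ L|y − y'| for all y, y' ∈ ℝ. -/
import Mathlib


open Real

/-- The function `l` of Example 2.7 (`l(y) = 0` for `y ≤ 0`, `-√y` for `0 < y ≤ 1`,
`-e^{1-y}` for `y > 1`) is continuous, takes values in `[-1, 0]`, satisfies the
one-sided monotonicity condition, and is not Lipschitz continuous. -/
theorem stmt_7 (l : ℝ → ℝ)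
    (h0 : ∀ y : ℝ, y ≤ 0 → l y = 0)
    (h1 : ∀ y : ℝ, 0 < y → y ≤ 1 → l y = -Real.sqrt y)
    (h2 : ∀ y : ℝ, 1 < y → l y = -Real.exp (1 - y)) :
    Continuous l ∧
    (∀ y : ℝ, l y ∈ Set.Icc (-1 : ℝ) 0) ∧
    (∀ y y' : ℝ, (l y - l y') * (y - y') ≤ (y - y') ^ 2) ∧
    ¬ ∃ L : ℝ, 0 ≤ L ∧ ∀ y y' : ℝ, |l y - l y'| ≤ L * |y - y'| := by
  have heq : l = fun y => -(min (Real.sqrt y) (Real.exp (1 - y))) := by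
    funext y
    rcases le_or_gt y 0 with hy | hy
    · have hs : Real.sqrt y = 0 := Real.sqrt_eq_zero'.mpr hy
      rw [h0 y hy]
      simp [hs, min_eq_left (Real.exp_pos (1 - y)).le]
    · rcases le_or_gt y 1 with hy1 | hy1
      · have hs : Real.sqrt y ≤ 1 := by
          rw [show (1:ℝ) = Real.sqrt 1 by simp]
          exact Real.sqrt_le_sqrt hy1
        have he : (1:ℝ) ≤ Real.exp (1 - y) := Real.one_le_exp (by linarith)
        rw [h1 y hy hy1, min_eq_left (hs.trans he)]
      · have hs : (1:ℝ) ≤ Real.sqrt y := by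
          rw [show (1:ℝ) = Real.sqrt 1 by simp]
          exact Real.sqrt_le_sqrt hy1.le
        have he : Real.exp (1 - y) ≤ 1 := Real.exp_le_one_iff.mpr (by linarith)
        rw [h2 y hy1, min_eq_right (he.trans hs)]
  have key : ∀ y y' : ℝ, y' ≤ y → l y - l y' ≤ y - y' := by
    intro y y' hle
    rcases le_or_gt y 0 with hy | hy
    · rw [h0 y hy, h0 y' (hle.trans hy)]; linarith
    · rcases le_or_gt y 1 with hy1 | hy1
      · rw [h1 y hy hy1]
        rcases le_or_gt y' 0 with hy' | hy'
        · rw [h0 y' hy']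
          have := Real.sqrt_nonneg y
          linarith
        · rw [h1 y' hy' (hle.trans hy1)]
          have := Real.sqrt_le_sqrt hle
          linarith
      · rw [h2 y hy1]
        have hexp_pos := Real.exp_pos (1 - y)
        rcases le_or_gt y' 0 with hy' | hy'
        · rw [h0 y' hy']; linarith
        · rcases le_or_gt y' 1 with hy'1 | hy'1
          · rw [h1 y' hy' hy'1]
            have hs : Real.sqrt y' ≤ 1 := by
              rw [show (1:ℝ) = Real.sqrt 1 by simp]
              exact Real.sqrt_le_sqrt hy'1
            have hae : (1 - y) + 1 ≤ Real.exp (1 - y) := Real.add_one_le_exp _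
            linarith
          · rw [h2 y' hy'1]
            have hA : Real.exp (1 - y') ≤ 1 := Real.exp_le_one_iff.mpr (by linarith)
            have hB : (y' - y) + 1 ≤ Real.exp (y' - y) := Real.add_one_le_exp _
            have hC : Real.exp (1 - y') * Real.exp (y' - y) = Real.exp (1 - y) := by
              rw [← Real.exp_add]; ring_nf
            have hP := (Real.exp_pos (1 - y')).le
            nlinarith [Real.exp_pos (y' - y)]
  refine ⟨?_, ?_, ?_, ?_⟩
  · rw [heq]
    have : Continuous fun y : ℝ => Real.exp (1 - y) :=
      Real.continuous_exp.comp (continuous_const.sub continuous_id)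
    exact (Real.continuous_sqrt.min this).neg
  · intro y
    rcases le_or_gt y 0 with hy | hy
    · rw [h0 y hy]; constructor <;> norm_num
    · rcases le_or_gt y 1 with hy1 | hy1
      · rw [h1 y hy hy1]
        have hs : Real.sqrt y ≤ 1 := by
          rw [show (1:ℝ) = Real.sqrt 1 by simp]
          exact Real.sqrt_le_sqrt hy1
        have := Real.sqrt_nonneg y
        constructor <;> simp <;> linarith
      · rw [h2 y hy1]
        have he : Real.exp (1 - y) ≤ 1 := Real.exp_le_one_iff.mpr (by linarith)
        have := Real.exp_pos (1 - y)
        constructor <;> simp <;> linarith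
  · intro y y'
    rcases le_total y' y with hle | hle
    · have := key y y' hle
      have h' : 0 ≤ y - y' := by linarith
      calc (l y - l y') * (y - y') ≤ (y - y') * (y - y') :=
            mul_le_mul_of_nonneg_right this h'
        _ = (y - y') ^ 2 := by ring
    · have := key y' y hle
      have h' : 0 ≤ y' - y := by linarith
      have : (l y - l y') * (y - y') = (l y' - l y) * (y' - y) := by ring
      rw [this]
      calc (l y' - l y) * (y' - y) ≤ (y' - y) * (y' - y) :=
            mul_le_mul_of_nonneg_right (key y' y hle) h'
        _ = (y - y') ^ 2 := by ring
  · rintro ⟨L, hL, hbd⟩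
    have hL1 : (0:ℝ) < L + 1 := by linarith
    set a : ℝ := (L + 1)⁻¹ with ha
    have hap : 0 < a := by positivity
    have ha1 : a ≤ 1 := by
      rw [ha]
      exact inv_le_one_of_one_le₀ (by linarith)
    have hy : 0 < a ^ 2 := by positivity
    have hy1 : a ^ 2 ≤ 1 := by nlinarith
    have hbd' := hbd (a ^ 2) 0
    rw [h1 _ hy hy1, h0 0 le_rfl, Real.sqrt_sq hap.le] at hbd'
    have habs : |(-a : ℝ) - 0| = a := by
      rw [sub_zero, abs_neg, abs_of_pos hap]
    have habs2 : |(a ^ 2 : ℝ) - 0| = a ^ 2 := by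
      rw [sub_zero, abs_of_pos hy]
    rw [habs, habs2] at hbd'
    have hmul : a * (L + 1) = 1 := inv_mul_cancel₀ (ne_of_gt hL1)
    nlinarith
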